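/- Let m be a lawful monad on types, A a type (the alphabet), β : m Bool → Bool an Eilenberg–Moore algebra for m, and (o, δ) an m-automaton with o : X → Bool and δ : X → A → m X. Let beh₁ : X → List A → Bool be the unique function with beh₁ x [] = o x and beh₁ x (a :: w) = β ((fun y => beh₁ y w) <$> δ x a), and define beh₂ : m X → List A → Bool by beh₂ t [] = β (o <$> t) and beh₂ t (a :: w) = beh₂ (joinM ((fun x => δ x a) <$> t)) w. Then beh₂ (pure x) w = beh₁ x w for every x : X and w : List A. -/
import Mathlib


/-- Correspondence of the bialgebraic semantics `beh₁` and the semantics via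
determinization `beh₂`: `beh₂ (pure x) = beh₁ x`. -/
theorem determinization_semantics_eq_bialgebraic {m : Type → Type} [Monad m] [LawfulMonad m]
    {A X : Type} (β : m Bool → Bool)
    (hβη : ∀ b : Bool, β (pure b) = b)
    (hβμ : ∀ t : m (m Bool), β (joinM t) = β (β <$> t))
    (o : X → Bool) (δ : X → A → m X)
    (beh₁ : X → List A → Bool)
    (h₁nil : ∀ x : X, beh₁ x [] = o x)
    (h₁cons : ∀ (x : X) (a : A) (w : List A),
      beh₁ x (a :: w) = β ((fun y => beh₁ y w) <$> δ x a))
    (beh₂ : m X → List A → Bool)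
    (h₂nil : ∀ t : m X, beh₂ t [] = β (o <$> t))
    (h₂cons : ∀ (t : m X) (a : A) (w : List A),
      beh₂ t (a :: w) = beh₂ (joinM ((fun x => δ x a) <$> t)) w) :
    ∀ (x : X) (w : List A), beh₂ (pure x) w = beh₁ x w := by
  have key : ∀ (w : List A) (t : m X), beh₂ t w = β ((fun x => beh₁ x w) <$> t) := by
    intro w
    induction w with
    | nil => intro t; simp [h₂nil, h₁nil]
    | cons a w ih =>
      intro t
      rw [h₂cons, ih]
      have : ((fun x => beh₁ x w) <$> joinM ((fun x => δ x a) <$> t))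
          = joinM ((fun x => (fun y => beh₁ y w) <$> δ x a) <$> t) := by
        simp [joinM, map_bind, bind_map_left, Function.comp]
      rw [this, hβμ, ← comp_map]
      have hf : (β ∘ fun x => (fun y => beh₁ y w) <$> δ x a)
          = fun x => beh₁ x (a :: w) := by
        funext x; simp [Function.comp, h₁cons]
      rw [hf]
  intro x w
  rw [key]
  simp [map_pure, hβη]
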